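/- KL-regularized off-policy lower bound: for learning policy π_T, behavior policy β_T and any policy π, with ε^π = max_s |E_{a∼π}[A_{π_T}(s,a)]|, J(π) − J(π_T) ≥ (1/(1−γ)) E_{s∼d^{β_T}, a∼β_T(·|s)}[(π(a|s)/β_T(a|s)) A_{π_T}(s,a)] − (2γε^π/(1−γ)^2) sqrt( (1/2) E_{s∼d^{β_T}}[D_KL(β_T(·|s) ‖ π(·|s))] ). -/

import Mathlib

open Finset

noncomputable section

set_option linter.unusedSectionVars false
variable {S A : Type*} [Fintype S] [Fintype A] [DecidableEq S]

/-- A policy assigns a probability distribution over actions to each state. -/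
def IsPolicy (p : S → A → ℝ) : Prop :=
  (∀ s a, 0 ≤ p s a) ∧ ∀ s, ∑ a, p s a = 1

/-- A finite Markov decision process with discount factor `γ ∈ [0,1)`. -/
structure FinMDP (S A : Type*) [Fintype S] [Fintype A] where
  P : S → A → S → ℝ
  P_nonneg : ∀ s a s', 0 ≤ P s a s'
  P_sum : ∀ s a, ∑ s', P s a s' = 1
  r : S → A → ℝ
  μ : S → ℝ
  μ_nonneg : ∀ s, 0 ≤ μ s
  μ_sum : ∑ s, μ s = 1
  γ : ℝ
  γ_nonneg : 0 ≤ γ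
  γ_lt_one : γ < 1

/-- One step of the state-distribution evolution under a policy. -/
def stepDist (M : FinMDP S A) (π : S → A → ℝ) (d : S → ℝ) : S → ℝ :=
  fun s' => ∑ s, ∑ a, d s * π s a * M.P s a s'

/-- Distribution of the state at time `t`, starting from `μ`, following `π`. -/
def stateDist (M : FinMDP S A) (π : S → A → ℝ) : ℕ → S → ℝ
  | 0 => M.μ
  | t + 1 => stepDist M π (stateDist M π t)

/-- Expected discounted return `J(π)` with initial distribution `μ`. -/
def Jret (M : FinMDP S A) (π : S → A → ℝ) : ℝ :=
  ∑' t : ℕ, M.γ ^ t * ∑ s, stateDist M π t s * ∑ a, π s a * M.r s a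

/-- Discounted future state visitation distribution `d^π`. -/
def dVisit (M : FinMDP S A) (π : S → A → ℝ) (s : S) : ℝ :=
  (1 - M.γ) * ∑' t : ℕ, M.γ ^ t * stateDist M π t s

/-- Distribution of the state at time `t` starting deterministically from `s₀`. -/
def stateDistFrom (M : FinMDP S A) (π : S → A → ℝ) (s₀ : S) : ℕ → S → ℝ
  | 0 => fun s => if s = s₀ then 1 else 0
  | t + 1 => stepDist M π (stateDistFrom M π s₀ t)

/-- State value function `V_π(s₀)`: expected discounted return starting from `s₀`. -/
def Vval (M : FinMDP S A) (π : S → A → ℝ) (s₀ : S) : ℝ :=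
  ∑' t : ℕ, M.γ ^ t * ∑ s, stateDistFrom M π s₀ t s * ∑ a, π s a * M.r s a

/-- State-action value function `Q_π(s,a)`. -/
def Qval (M : FinMDP S A) (π : S → A → ℝ) (s : S) (a : A) : ℝ :=
  M.r s a + M.γ * ∑ s', M.P s a s' * Vval M π s'

/-- Advantage function `A_π(s,a) = Q_π(s,a) - V_π(s)`. -/
def Adv (M : FinMDP S A) (π : S → A → ℝ) (s : S) (a : A) : ℝ :=
  Qval M π s a - Vval M π s

/-- Total variation distance between two distributions over actions. -/
def DTV (p q : A → ℝ) : ℝ := (1 / 2) * ∑ a, |p a - q a|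

/-- KL divergence between two distributions over actions. -/
def DKL (p q : A → ℝ) : ℝ := ∑ a, p a * Real.log (p a / q a)

section Pinsker

lemma log_ge_one_sub_inv {t : ℝ} (ht : 0 < t) : 1 - 1/t ≤ Real.log t := by
  have h := Real.log_le_sub_one_of_pos (x := 1/t) (by positivity)
  rw [Real.log_div one_ne_zero (ne_of_gt ht), Real.log_one] at h
  linarith

lemma u_hasDeriv {t : ℝ} (ht : 0 < t) :
    HasDerivAt (fun t : ℝ => (t+1) * Real.log t - 2*(t-1))
      (Real.log t + 1/t - 1) t := by
  have h1 : HasDerivAt (fun t : ℝ => (t+1) * Real.log t)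
      (1 * Real.log t + (t+1) * t⁻¹) t := by
    exact (((hasDerivAt_id t).add_const 1)).mul (Real.hasDerivAt_log (ne_of_gt ht))
  have h2 : HasDerivAt (fun t : ℝ => 2*(t-1)) 2 t := by
    simpa using ((hasDerivAt_id t).sub_const 1).const_mul 2
  have := h1.sub h2
  refine this.congr_deriv ?_
  rw [add_mul, mul_inv_cancel₀ (ne_of_gt ht)]
  ring

lemma u_nonneg_of_one_le {t : ℝ} (ht : 1 ≤ t) :
    0 ≤ (t+1) * Real.log t - 2*(t-1) := by
  have hmono : MonotoneOn (fun t : ℝ => (t+1) * Real.log t - 2*(t-1)) (Set.Ici 1) := by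
    apply monotoneOn_of_deriv_nonneg (convex_Ici 1)
    · apply ContinuousOn.sub
      · exact (continuousOn_id.add continuousOn_const).mul
          (Real.continuousOn_log.mono (by intro x hx; simp at hx ⊢; linarith))
      · fun_prop
    · intro x hx
      rw [interior_Ici] at hx
      exact ((u_hasDeriv (by linarith [Set.mem_Ioi.mp hx])).differentiableAt).differentiableWithinAt
    · intro x hx
      rw [interior_Ici] at hx
      have hx1 : (1:ℝ) < x := hx
      have hx0 : (0:ℝ) < x := by linarith
      rw [(u_hasDeriv hx0).deriv]
      have := log_ge_one_sub_inv hx0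
      linarith
  have h0 : (fun t : ℝ => (t+1) * Real.log t - 2*(t-1)) 1 = 0 := by simp
  have := hmono (Set.self_mem_Ici) (Set.mem_Ici.mpr ht) ht
  simpa [h0] using this

lemma u_nonpos_of_le_one {t : ℝ} (ht0 : 0 < t) (ht : t ≤ 1) :
    (t+1) * Real.log t - 2*(t-1) ≤ 0 := by
  have hmono : MonotoneOn (fun t : ℝ => (t+1) * Real.log t - 2*(t-1)) (Set.Icc t 1) := by
    apply monotoneOn_of_deriv_nonneg (convex_Icc t 1)
    · apply ContinuousOn.sub
      · exact (continuousOn_id.add continuousOn_const).mul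
          (Real.continuousOn_log.mono (by intro x hx; simp at hx ⊢; intro h; linarith [hx.1]))
      · fun_prop
    · intro x hx
      rw [interior_Icc] at hx
      exact ((u_hasDeriv (lt_of_lt_of_le ht0 (le_of_lt hx.1))).differentiableAt).differentiableWithinAt
    · intro x hx
      rw [interior_Icc] at hx
      have hx0 : (0:ℝ) < x := lt_of_lt_of_le ht0 (le_of_lt hx.1)
      rw [(u_hasDeriv hx0).deriv]
      have := log_ge_one_sub_inv hx0
      linarith
  have := hmono (Set.mem_Icc.mpr ⟨le_refl t, ht⟩) (Set.mem_Icc.mpr ⟨ht, le_refl 1⟩) ht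
  simpa using this

lemma h_hasDeriv {t : ℝ} (ht : 0 < t) :
    HasDerivAt (fun t : ℝ => (2*t+4)*(t * Real.log t - t + 1) - 3*(t-1)^2)
      (4*((t+1) * Real.log t - 2*(t-1))) t := by
  have h1 : HasDerivAt (fun t : ℝ => t * Real.log t) (Real.log t + 1) t :=
    Real.hasDerivAt_mul_log (ne_of_gt ht)
  have h2 : HasDerivAt (fun t : ℝ => t * Real.log t - t + 1) (Real.log t + 1 - 1) t :=
    (h1.sub (hasDerivAt_id t)).add_const 1
  have h3 : HasDerivAt (fun t : ℝ => 2*t+4) 2 t := by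
    simpa using ((hasDerivAt_id t).const_mul 2).add_const 4
  have h4 : HasDerivAt (fun t : ℝ => (2*t+4)*(t * Real.log t - t + 1))
      (2 * (t * Real.log t - t + 1) + (2*t+4) * (Real.log t + 1 - 1)) t := h3.mul h2
  have h5 : HasDerivAt (fun t : ℝ => 3*(t-1)^2) (3*(2*(t-1))) t := by
    simpa using (((hasDerivAt_id t).sub_const 1).pow 2).const_mul 3
  refine (h4.sub h5).congr_deriv ?_
  ring

lemma h_nonneg {t : ℝ} (ht : 0 < t) :
    0 ≤ (2*t+4)*(t * Real.log t - t + 1) - 3*(t-1)^2 := by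
  set f : ℝ → ℝ := fun t => (2*t+4)*(t * Real.log t - t + 1) - 3*(t-1)^2 with hf
  have hcont : ∀ s : Set ℝ, (∀ x ∈ s, (0:ℝ) < x) → ContinuousOn f s := by
    intro s hs
    apply ContinuousOn.sub
    · apply ContinuousOn.mul (by fun_prop)
      exact ((continuousOn_id.mul (Real.continuousOn_log.mono (by
        intro x hx; exact ne_of_gt (hs x hx)))).sub continuousOn_id).add continuousOn_const
    · fun_prop
  have hf1 : f 1 = 0 := by simp [hf]
  rcases le_or_gt 1 t with h1 | h1
  · have hmono : MonotoneOn f (Set.Ici 1) := by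
      apply monotoneOn_of_deriv_nonneg (convex_Ici 1)
      · exact hcont _ (by intro x hx; simp at hx; linarith)
      · intro x hx
        rw [interior_Ici] at hx
        exact ((h_hasDeriv (by linarith [Set.mem_Ioi.mp hx])).differentiableAt).differentiableWithinAt
      · intro x hx
        rw [interior_Ici] at hx
        have hx1 : (1:ℝ) < x := hx
        rw [(h_hasDeriv (by linarith)).deriv]
        have := u_nonneg_of_one_le (le_of_lt hx1)
        linarith
    have := hmono Set.self_mem_Ici (Set.mem_Ici.mpr h1) h1
    rw [hf1] at this; exact this
  · have hanti : MonotoneOn (fun t => -(f t)) (Set.Icc t 1) := by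
      apply monotoneOn_of_deriv_nonneg (convex_Icc t 1)
      · exact (hcont _ (by intro x hx; simp at hx; linarith [hx.1])).neg
      · intro x hx
        rw [interior_Icc] at hx
        exact (((h_hasDeriv (lt_of_lt_of_le ht (le_of_lt hx.1))).differentiableAt).neg).differentiableWithinAt
      · intro x hx
        rw [interior_Icc] at hx
        have hx0 : (0:ℝ) < x := lt_of_lt_of_le ht (le_of_lt hx.1)
        rw [show deriv (fun t => -f t) x = -deriv f x from deriv.neg, (h_hasDeriv hx0).deriv]
        have := u_nonpos_of_le_one hx0 (le_of_lt hx.2)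
        linarith
    have := hanti (Set.mem_Icc.mpr ⟨le_refl t, le_of_lt h1⟩)
      (Set.mem_Icc.mpr ⟨le_of_lt h1, le_refl 1⟩) (le_of_lt h1)
    simp only [hf1, neg_zero] at this
    have h2 : 0 ≤ f t := by linarith
    simpa [hf] using h2

/-- Pointwise: for `p, q > 0`, `p log(p/q) - p + q ≥ 3(p-q)²/(2p+4q)`. -/
lemma pointwise_kl_bound {p q : ℝ} (hp : 0 < p) (hq : 0 < q) :
    3*(p-q)^2 / (2*p+4*q) ≤ p * Real.log (p/q) - p + q := by
  have ht : 0 < p/q := by positivity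
  have h := h_nonneg ht
  have hq' : q ≠ 0 := ne_of_gt hq
  have e1 : (2*(p/q)+4) = (2*p+4*q)/q := by field_simp
  have e2 : (p/q) * Real.log (p/q) - (p/q) + 1 = (p * Real.log (p/q) - p + q)/q := by
    field_simp
  have e3 : ((p/q)-1)^2 = (p-q)^2/q^2 := by field_simp
  rw [e1, e2, e3] at h
  have hd : 0 < 2*p+4*q := by linarith
  rw [div_le_iff₀ hd]
  have hq2 : (0:ℝ) < q^2 := by positivity
  rw [sub_nonneg, div_mul_div_comm, ← mul_div_assoc] at h
  rw [show q * q = q^2 by ring, div_le_div_iff₀ hq2 hq2] at h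
  nlinarith [h, sq_nonneg q]

/-- Finite Pinsker: `(∑ |p-q|)² ≤ 2 ∑ p log(p/q)` for positive distributions. -/
lemma finite_pinsker {A : Type*} [Fintype A] {p q : A → ℝ}
    (hp : ∀ a, 0 < p a) (hq : ∀ a, 0 < q a)
    (hps : ∑ a, p a = 1) (hqs : ∑ a, q a = 1) :
    (∑ a, |p a - q a|) ^ 2 ≤ 2 * ∑ a, p a * Real.log (p a / q a) := by
  set w : A → ℝ := fun a => (2 * p a + 4 * q a) / 3 with hw
  have hwpos : ∀ a ∈ Finset.univ (α := A), 0 < w a := fun a _ => by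
    have := hp a; have := hq a; simp only [hw]; positivity
  have hws : ∑ a, w a = 2 := by
    simp only [hw]
    rw [← Finset.sum_div, Finset.sum_add_distrib, ← Finset.mul_sum, ← Finset.mul_sum,
      hps, hqs]
    norm_num
  have hCS := Finset.sq_sum_div_le_sum_sq_div Finset.univ (fun a => |p a - q a|) hwpos
  rw [hws] at hCS
  have hbound : ∑ a, |p a - q a| ^ 2 / w a ≤ ∑ a, p a * Real.log (p a / q a) := by
    have key : ∀ a, |p a - q a| ^ 2 / w a ≤ p a * Real.log (p a / q a) - p a + q a := by
      intro a
      rw [sq_abs]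
      have := pointwise_kl_bound (hp a) (hq a)
      calc (p a - q a) ^ 2 / w a = 3 * (p a - q a) ^ 2 / (2 * p a + 4 * q a) := by
            rw [hw]; field_simp
        _ ≤ _ := this
    calc ∑ a, |p a - q a| ^ 2 / w a ≤ ∑ a, (p a * Real.log (p a / q a) - p a + q a) :=
          Finset.sum_le_sum fun a _ => key a
      _ = ∑ a, p a * Real.log (p a / q a) := by
          rw [Finset.sum_add_distrib, Finset.sum_sub_distrib, hps, hqs]; ring
  have h2 : (∑ a, |p a - q a|) ^ 2 / 2 ≤ ∑ a, p a * Real.log (p a / q a) :=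
    le_trans hCS hbound
  linarith

end Pinsker

namespace OffPolicy

variable (M : FinMDP S A)

/-- Mean reward under policy `π` at state `s`. -/
def rbar (π : S → A → ℝ) (s : S) : ℝ := ∑ a, π s a * M.r s a

/-- One-step state transition kernel under policy `π`. -/
def Ppol (π : S → A → ℝ) (s s' : S) : ℝ := ∑ a, π s a * M.P s a s'

variable {M}

lemma Ppol_nonneg {π : S → A → ℝ} (hπ : IsPolicy π) (s s' : S) : 0 ≤ Ppol M π s s' :=
  Finset.sum_nonneg fun a _ => mul_nonneg (hπ.1 s a) (M.P_nonneg s a s')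

lemma Ppol_sum {π : S → A → ℝ} (hπ : IsPolicy π) (s : S) : ∑ s', Ppol M π s s' = 1 := by
  simp only [Ppol]
  rw [Finset.sum_comm]
  calc ∑ a, ∑ s', π s a * M.P s a s' = ∑ a, π s a * ∑ s', M.P s a s' := by
        simp [Finset.mul_sum]
    _ = 1 := by simp [M.P_sum, hπ.2 s]

lemma stepDist_nonneg {π : S → A → ℝ} (hπ : IsPolicy π) {d : S → ℝ} (hd : ∀ s, 0 ≤ d s)
    (s' : S) : 0 ≤ stepDist M π d s' :=
  Finset.sum_nonneg fun s _ => Finset.sum_nonneg fun a _ =>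
    mul_nonneg (mul_nonneg (hd s) (hπ.1 s a)) (M.P_nonneg s a s')

lemma stepDist_sum {π : S → A → ℝ} (hπ : IsPolicy π) (d : S → ℝ) :
    ∑ s', stepDist M π d s' = ∑ s, d s := by
  simp only [stepDist]
  rw [Finset.sum_comm]
  refine Finset.sum_congr rfl fun s _ => ?_
  rw [Finset.sum_comm]
  calc ∑ a, ∑ s', d s * π s a * M.P s a s' = ∑ a, d s * π s a * ∑ s', M.P s a s' := by
        simp [Finset.mul_sum]
    _ = d s := by rw [Finset.sum_congr rfl fun a _ => by rw [M.P_sum, mul_one],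
          ← Finset.mul_sum, hπ.2 s, mul_one]

lemma stateDist_nonneg {π : S → A → ℝ} (hπ : IsPolicy π) (t : ℕ) (s : S) :
    0 ≤ stateDist M π t s := by
  induction t generalizing s with
  | zero => exact M.μ_nonneg s
  | succ t ih => exact stepDist_nonneg hπ (fun s => ih s) s

lemma stateDist_sum {π : S → A → ℝ} (hπ : IsPolicy π) (t : ℕ) :
    ∑ s, stateDist M π t s = 1 := by
  induction t with
  | zero => exact M.μ_sum
  | succ t ih => rw [stateDist, stepDist_sum hπ, ih]

lemma stateDist_le_one {π : S → A → ℝ} (hπ : IsPolicy π) (t : ℕ) (s : S) :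
    stateDist M π t s ≤ 1 := by
  calc stateDist M π t s ≤ ∑ s', stateDist M π t s' :=
        Finset.single_le_sum (fun s' _ => stateDist_nonneg hπ t s') (Finset.mem_univ s)
    _ = 1 := stateDist_sum hπ t

lemma stateDistFrom_nonneg {π : S → A → ℝ} (hπ : IsPolicy π) (s₀ : S) (t : ℕ) (s : S) :
    0 ≤ stateDistFrom M π s₀ t s := by
  induction t generalizing s with
  | zero => simp only [stateDistFrom]; split <;> norm_num
  | succ t ih => exact stepDist_nonneg hπ (fun s => ih s) s

lemma stateDistFrom_sum {π : S → A → ℝ} (hπ : IsPolicy π) (s₀ : S) (t : ℕ) :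
    ∑ s, stateDistFrom M π s₀ t s = 1 := by
  induction t with
  | zero => simp [stateDistFrom]
  | succ t ih => rw [stateDistFrom, stepDist_sum hπ, ih]

lemma stateDistFrom_le_one {π : S → A → ℝ} (hπ : IsPolicy π) (s₀ : S) (t : ℕ) (s : S) :
    stateDistFrom M π s₀ t s ≤ 1 := by
  calc stateDistFrom M π s₀ t s ≤ ∑ s', stateDistFrom M π s₀ t s' :=
        Finset.single_le_sum (fun s' _ => stateDistFrom_nonneg hπ s₀ t s') (Finset.mem_univ s)
    _ = 1 := stateDistFrom_sum hπ s₀ t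

/-- Summability of geometrically weighted bounded sequences. -/
lemma summable_geom_bound {γ : ℝ} (hγ0 : 0 ≤ γ) (hγ1 : γ < 1) {f : ℕ → ℝ} {C : ℝ}
    (h : ∀ t, |f t| ≤ C) : Summable (fun t => γ ^ t * f t) := by
  apply Summable.of_norm_bounded (g := fun t => C * γ ^ t)
    ((summable_geometric_of_lt_one hγ0 hγ1).mul_left C)
  intro t
  rw [Real.norm_eq_abs, abs_mul, abs_pow, abs_of_nonneg hγ0, mul_comm]
  exact mul_le_mul_of_nonneg_right (h t) (pow_nonneg hγ0 t)

/-- A distribution-weighted sum of a bounded function is bounded. -/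
lemma weighted_sum_bound {d c : S → ℝ} (hd0 : ∀ s, 0 ≤ d s) (hd1 : ∀ s, d s ≤ 1) :
    |∑ s, d s * c s| ≤ ∑ s, |c s| := by
  calc |∑ s, d s * c s| ≤ ∑ s, |d s * c s| := Finset.abs_sum_le_sum_abs _ _
    _ ≤ ∑ s, |c s| := by
        refine Finset.sum_le_sum fun s _ => ?_
        rw [abs_mul, abs_of_nonneg (hd0 s)]
        calc d s * |c s| ≤ 1 * |c s| :=
              mul_le_mul_of_nonneg_right (hd1 s) (abs_nonneg _)
          _ = |c s| := one_mul _

lemma indicator_dot (c : S → ℝ) (s₀ : S) : ∑ s, (if s = s₀ then (1:ℝ) else 0) * c s = c s₀ := by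
  simp only [ite_mul, one_mul, zero_mul, Finset.sum_ite_eq', Finset.mem_univ, if_true]

lemma dot_indicator (c : S → ℝ) (s₀ : S) : ∑ s, c s * (if s = s₀ then (1:ℝ) else 0) = c s₀ := by
  simp only [mul_ite, mul_one, mul_zero, Finset.sum_ite_eq', Finset.mem_univ, if_true]

lemma dot_indicator' (c : S → ℝ) (s₀ : S) : ∑ s, c s * (if s₀ = s then (1:ℝ) else 0) = c s₀ := by
  simp only [mul_ite, mul_one, mul_zero, Finset.sum_ite_eq, Finset.mem_univ, if_true]

lemma stepDist_delta (π : S → A → ℝ) (s₀ s' : S) :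
    stepDist M π (fun s => if s = s₀ then 1 else 0) s' = Ppol M π s₀ s' := by
  simp only [stepDist, ite_mul, one_mul, zero_mul, Ppol]
  rw [Finset.sum_comm]
  simp

lemma stepDist_mix (π : S → A → ℝ) (c : S → ℝ) (ds : S → S → ℝ) (s' : S) :
    stepDist M π (fun s => ∑ i, c i * ds i s) s' = ∑ i, c i * stepDist M π (ds i) s' := by
  have L : ∀ s a, (∑ i, c i * ds i s) * π s a * M.P s a s'
      = ∑ i, c i * (ds i s * π s a * M.P s a s') := by
    intro s a
    rw [Finset.sum_mul, Finset.sum_mul]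
    exact Finset.sum_congr rfl fun i _ => by ring
  show ∑ s, ∑ a, (∑ i, c i * ds i s) * π s a * M.P s a s' = _
  rw [Finset.sum_congr rfl fun s (_ : s ∈ Finset.univ) =>
    Finset.sum_congr rfl fun a (_ : a ∈ Finset.univ) => L s a]
  rw [Finset.sum_congr rfl fun s (_ : s ∈ Finset.univ) =>
    (Finset.sum_comm : (∑ a : A, ∑ i : S, c i * (ds i s * π s a * M.P s a s')) = _)]
  rw [Finset.sum_comm]
  refine Finset.sum_congr rfl fun i _ => ?_
  rw [stepDist, Finset.mul_sum]
  refine Finset.sum_congr rfl fun s _ => ?_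
  rw [Finset.mul_sum]

lemma stateDistFrom_succ {π : S → A → ℝ} (s₀ : S) (t : ℕ) (s : S) :
    stateDistFrom M π s₀ (t+1) s = ∑ s₁, Ppol M π s₀ s₁ * stateDistFrom M π s₁ t s := by
  induction t generalizing s with
  | zero =>
    have h0 : stateDistFrom M π s₀ 0 = fun s => if s = s₀ then (1:ℝ) else 0 := rfl
    show stepDist M π (stateDistFrom M π s₀ 0) s = _
    rw [h0, stepDist_delta]
    simp only [stateDistFrom]
    rw [dot_indicator' (Ppol M π s₀) s]
  | succ t ih =>
    show stepDist M π (stateDistFrom M π s₀ (t+1)) s = _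
    have hfun : stateDistFrom M π s₀ (t+1) =
        fun s => ∑ s₁, Ppol M π s₀ s₁ * stateDistFrom M π s₁ t s := funext fun s => ih s
    rw [hfun, stepDist_mix]
    rfl

lemma stateDist_eq_mix {π : S → A → ℝ} (t : ℕ) (s : S) :
    stateDist M π t s = ∑ s₀, M.μ s₀ * stateDistFrom M π s₀ t s := by
  induction t generalizing s with
  | zero =>
    simp only [stateDist, stateDistFrom]
    rw [dot_indicator' M.μ s]
  | succ t ih =>
    show stepDist M π (stateDist M π t) s = _
    have hfun : stateDist M π t = fun s => ∑ s₀, M.μ s₀ * stateDistFrom M π s₀ t s :=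
      funext fun s => ih s
    rw [hfun, stepDist_mix]
    rfl

/-- `f t s₀` : expected reward at time `t` starting from `s₀`. -/
def fres (M : FinMDP S A) (π : S → A → ℝ) (t : ℕ) (s₀ : S) : ℝ :=
  ∑ s, stateDistFrom M π s₀ t s * rbar M π s

lemma fres_abs_le {π : S → A → ℝ} (hπ : IsPolicy π) (t : ℕ) (s₀ : S) :
    |fres M π t s₀| ≤ ∑ s, |rbar M π s| :=
  weighted_sum_bound (stateDistFrom_nonneg hπ s₀ t) (stateDistFrom_le_one hπ s₀ t)

lemma summable_fres {π : S → A → ℝ} (hπ : IsPolicy π) (s₀ : S) :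
    Summable (fun t => M.γ ^ t * fres M π t s₀) :=
  summable_geom_bound M.γ_nonneg M.γ_lt_one (fun t => fres_abs_le hπ t s₀)

lemma Vval_eq_tsum (π : S → A → ℝ) (s₀ : S) :
    Vval M π s₀ = ∑' t : ℕ, M.γ ^ t * fres M π t s₀ := rfl

lemma fres_zero (π : S → A → ℝ) (s₀ : S) : fres M π 0 s₀ = rbar M π s₀ := by
  simp only [fres, stateDistFrom]
  exact indicator_dot (rbar M π) s₀

lemma fres_succ (π : S → A → ℝ) (t : ℕ) (s₀ : S) :
    fres M π (t+1) s₀ = ∑ s₁, Ppol M π s₀ s₁ * fres M π t s₁ := by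
  simp only [fres]
  rw [Finset.sum_congr rfl fun s _ => by rw [stateDistFrom_succ s₀ t s]]
  simp only [Finset.sum_mul, Finset.mul_sum]
  rw [Finset.sum_comm]
  exact Finset.sum_congr rfl fun s₁ _ => Finset.sum_congr rfl fun s _ => by ring

/-- Bellman equation for `Vval`. -/
lemma Vval_bellman {π : S → A → ℝ} (hπ : IsPolicy π) (s₀ : S) :
    Vval M π s₀ = rbar M π s₀ + M.γ * ∑ s₁, Ppol M π s₀ s₁ * Vval M π s₁ := by
  rw [Vval_eq_tsum, Summable.tsum_eq_zero_add (summable_fres hπ s₀)]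
  congr 1
  · rw [pow_zero, one_mul, fres_zero]
  · have step : ∀ t : ℕ, M.γ ^ (t+1) * fres M π (t+1) s₀ =
        ∑ s₁, M.γ * (Ppol M π s₀ s₁ * (M.γ ^ t * fres M π t s₁)) := by
      intro t
      rw [fres_succ, Finset.mul_sum]
      exact Finset.sum_congr rfl fun s₁ _ => by ring
    rw [tsum_congr step]
    rw [Summable.tsum_finsetSum (fun s₁ _ => (((summable_fres hπ s₁).mul_left (Ppol M π s₀ s₁)).mul_left M.γ))]
    rw [Finset.mul_sum]
    exact Finset.sum_congr rfl fun s₁ _ => by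
      rw [tsum_mul_left, tsum_mul_left, Vval_eq_tsum]

/-- `Jret` as average of `Vval` over the initial distribution. -/
lemma Jret_eq_mix {π : S → A → ℝ} (hπ : IsPolicy π) :
    Jret M π = ∑ s₀, M.μ s₀ * Vval M π s₀ := by
  have hJ : Jret M π = ∑' t : ℕ, M.γ ^ t * ∑ s₀, M.μ s₀ * fres M π t s₀ := by
    refine tsum_congr fun t => ?_
    congr 1
    show ∑ s, stateDist M π t s * rbar M π s = _
    rw [Finset.sum_congr rfl fun s _ => by rw [stateDist_eq_mix t s]]
    simp only [Finset.sum_mul]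
    rw [Finset.sum_comm]
    refine Finset.sum_congr rfl fun s₀ _ => ?_
    rw [fres, Finset.mul_sum]
    exact Finset.sum_congr rfl fun s _ => by ring
  rw [hJ]
  have step : ∀ t : ℕ, M.γ ^ t * ∑ s₀, M.μ s₀ * fres M π t s₀ =
      ∑ s₀, M.μ s₀ * (M.γ ^ t * fres M π t s₀) := by
    intro t
    rw [Finset.mul_sum]
    exact Finset.sum_congr rfl fun s₀ _ => by ring
  rw [tsum_congr step,
    Summable.tsum_finsetSum (fun s₀ _ => (summable_fres hπ s₀).mul_left (M.μ s₀))]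
  exact Finset.sum_congr rfl fun s₀ _ => by rw [tsum_mul_left, Vval_eq_tsum]

/-- One-step kernel form of the state distribution recursion. -/
lemma stateDist_succ_kernel {π : S → A → ℝ} (t : ℕ) (s' : S) :
    stateDist M π (t+1) s' = ∑ s, stateDist M π t s * Ppol M π s s' := by
  show stepDist M π (stateDist M π t) s' = _
  rw [stepDist]
  refine Finset.sum_congr rfl fun s _ => ?_
  rw [Ppol, Finset.mul_sum]
  exact Finset.sum_congr rfl fun a _ => by ring

/-- Expected advantage of `π` against `πT`. -/
def gfun (M : FinMDP S A) (πT π : S → A → ℝ) (s : S) : ℝ := ∑ a, π s a * Adv M πT s a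

lemma gfun_eq {πT π : S → A → ℝ} (hπ : IsPolicy π) (s : S) :
    gfun M πT π s = rbar M π s + M.γ * (∑ s', Ppol M π s s' * Vval M πT s')
      - Vval M πT s := by
  have hswap : ∑ s', Ppol M π s s' * Vval M πT s'
      = ∑ a, π s a * ∑ s', M.P s a s' * Vval M πT s' := by
    simp only [Ppol, Finset.sum_mul]
    rw [Finset.sum_comm]
    refine Finset.sum_congr rfl fun a _ => ?_
    rw [Finset.mul_sum]
    exact Finset.sum_congr rfl fun s' _ => by ring
  simp only [gfun, Adv, Qval]
  calc ∑ a, π s a * (M.r s a + M.γ * ∑ s', M.P s a s' * Vval M πT s' - Vval M πT s)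
      = ∑ a, (π s a * M.r s a + M.γ * (π s a * ∑ s', M.P s a s' * Vval M πT s')
          - π s a * Vval M πT s) := Finset.sum_congr rfl fun a _ => by ring
    _ = rbar M π s + M.γ * (∑ a, π s a * ∑ s', M.P s a s' * Vval M πT s')
        - (∑ a, π s a) * Vval M πT s := by
        rw [Finset.sum_sub_distrib, Finset.sum_add_distrib, ← Finset.mul_sum,
          ← Finset.sum_mul, rbar]
    _ = _ := by rw [← hswap, hπ.2 s, one_mul]

/-- Bounds and summability for the weighted sums along `stateDist`. -/
lemma summable_stateDist_dot {π : S → A → ℝ} (hπ : IsPolicy π) (c : S → ℝ) :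
    Summable (fun t => M.γ ^ t * ∑ s, stateDist M π t s * c s) :=
  summable_geom_bound M.γ_nonneg M.γ_lt_one
    (fun t => weighted_sum_bound (stateDist_nonneg hπ t) (stateDist_le_one hπ t))

lemma summable_stateDist_single {π : S → A → ℝ} (hπ : IsPolicy π) (s : S) (c : ℝ) :
    Summable (fun t => M.γ ^ t * (stateDist M π t s * c)) := by
  apply summable_geom_bound M.γ_nonneg M.γ_lt_one (C := |c|)
  intro t
  rw [abs_mul]
  calc |stateDist M π t s| * |c| ≤ 1 * |c| := by
        apply mul_le_mul_of_nonneg_right _ (abs_nonneg c)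
        rw [abs_of_nonneg (stateDist_nonneg hπ t s)]
        exact stateDist_le_one hπ t s
    _ = |c| := one_mul _

set_option maxHeartbeats 1000000 in
/-- The key telescope identity. -/
lemma tsum_gfun_eq {πT π : S → A → ℝ} (hπ : IsPolicy π) (hπT : IsPolicy πT) :
    ∑' t : ℕ, M.γ ^ t * ∑ s, stateDist M π t s * gfun M πT π s
      = Jret M π - Jret M πT := by
  set V : S → ℝ := Vval M πT with hV
  set h : ℕ → ℝ := fun t => ∑ s, stateDist M π t s * V s with hh
  have key : ∀ t, ∑ s, stateDist M π t s * gfun M πT π s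
      = (∑ s, stateDist M π t s * rbar M π s) + M.γ * h (t+1) - h t := by
    intro t
    have e1 : ∀ s, stateDist M π t s * gfun M πT π s
        = stateDist M π t s * rbar M π s
          + M.γ * (stateDist M π t s * ∑ s', Ppol M π s s' * V s')
          - stateDist M π t s * V s := by
      intro s
      rw [gfun_eq hπ s]
      ring
    have hmid : ∑ s, stateDist M π t s * ∑ s', Ppol M π s s' * V s' = h (t+1) := by
      have e2 : ∀ s, stateDist M π t s * ∑ s', Ppol M π s s' * V s'
          = ∑ s', stateDist M π t s * Ppol M π s s' * V s' := by
        intro s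
        rw [Finset.mul_sum]
        exact Finset.sum_congr rfl fun s' _ => by ring
      rw [Finset.sum_congr rfl fun s (_ : s ∈ Finset.univ) => e2 s, Finset.sum_comm]
      show _ = ∑ s', stateDist M π (t+1) s' * V s'
      refine Finset.sum_congr rfl fun s' _ => ?_
      rw [stateDist_succ_kernel t s', Finset.sum_mul]
    rw [Finset.sum_congr rfl fun s (_ : s ∈ Finset.univ) => e1 s]
    rw [Finset.sum_sub_distrib, Finset.sum_add_distrib, ← Finset.mul_sum, hmid]
  have Sf : Summable (fun t => M.γ ^ t * ∑ s, stateDist M π t s * rbar M π s) :=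
    summable_stateDist_dot hπ _
  have Sh : Summable (fun t => M.γ ^ t * h t) := summable_stateDist_dot hπ V
  have Sh1 : Summable (fun t => M.γ ^ (t+1) * h (t+1)) :=
    (summable_nat_add_iff 1).mpr Sh
  have expand : ∀ t, M.γ ^ t * ∑ s, stateDist M π t s * gfun M πT π s
      = M.γ ^ t * ∑ s, stateDist M π t s * rbar M π s
        + (M.γ ^ (t+1) * h (t+1) - M.γ ^ t * h t) := by
    intro t
    rw [key t, pow_succ]
    ring
  rw [tsum_congr expand, Summable.tsum_add Sf (Sh1.sub Sh)]
  have hJπ : ∑' t : ℕ, M.γ ^ t * ∑ s, stateDist M π t s * rbar M π s = Jret M π := by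
    simp only [Jret, rbar]
  have htel : ∑' t : ℕ, (M.γ ^ (t+1) * h (t+1) - M.γ ^ t * h t) = - h 0 := by
    rw [Summable.tsum_sub Sh1 Sh]
    have := Summable.tsum_eq_zero_add Sh
    rw [pow_zero, one_mul] at this
    linarith [this]
  have h0 : h 0 = Jret M πT := by
    rw [hh]
    show ∑ s, M.μ s * V s = _
    rw [Jret_eq_mix hπT]
  rw [hJπ, htel, h0]
  ring

/-- dVisit basic facts. -/
lemma summable_dVisit_aux {π : S → A → ℝ} (hπ : IsPolicy π) (s : S) :
    Summable (fun t => M.γ ^ t * stateDist M π t s) := by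
  have := summable_stateDist_single (M := M) hπ s 1
  simpa using this

lemma dVisit_nonneg {π : S → A → ℝ} (hπ : IsPolicy π) (s : S) : 0 ≤ dVisit M π s := by
  apply mul_nonneg (by linarith [M.γ_lt_one])
  exact tsum_nonneg fun t => mul_nonneg (pow_nonneg M.γ_nonneg t) (stateDist_nonneg hπ t s)

lemma dVisit_sum {π : S → A → ℝ} (hπ : IsPolicy π) : ∑ s, dVisit M π s = 1 := by
  simp only [dVisit]
  rw [← Finset.mul_sum]
  rw [← Summable.tsum_finsetSum (fun s (_ : s ∈ Finset.univ) => summable_dVisit_aux hπ s)]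
  have e : ∀ t : ℕ, ∑ s, M.γ ^ t * stateDist M π t s = M.γ ^ t := by
    intro t
    rw [← Finset.mul_sum, stateDist_sum hπ, mul_one]
  rw [tsum_congr e, tsum_geometric_of_lt_one M.γ_nonneg M.γ_lt_one]
  have hne : (1:ℝ) - M.γ ≠ 0 := by
    have := M.γ_lt_one; intro hc; linarith [sub_eq_zero.mp hc]
  rw [mul_inv_cancel₀ hne]

/-- Swap identity expressing weighted sums of `dVisit` as a tsum. -/
lemma dVisit_dot {π : S → A → ℝ} (hπ : IsPolicy π) (c : S → ℝ) :
    ∑ s, dVisit M π s * c s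
      = (1 - M.γ) * ∑' t : ℕ, M.γ ^ t * ∑ s, stateDist M π t s * c s := by
  have e1 : ∀ s, dVisit M π s * c s = (1 - M.γ) * ∑' t : ℕ, M.γ ^ t * (stateDist M π t s * c s) := by
    intro s
    rw [dVisit, mul_assoc]
    congr 1
    rw [← tsum_mul_right]
    exact tsum_congr fun t => by ring
  rw [Finset.sum_congr rfl fun s (_ : s ∈ Finset.univ) => e1 s, ← Finset.mul_sum]
  congr 1
  rw [← Summable.tsum_finsetSum (fun s (_ : s ∈ Finset.univ) => summable_stateDist_single hπ s (c s))]
  exact tsum_congr fun t => by rw [Finset.mul_sum]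

/-- Performance difference lemma. -/
lemma perf_diff {πT π : S → A → ℝ} (hπ : IsPolicy π) (hπT : IsPolicy πT) :
    Jret M π - Jret M πT = (1 / (1 - M.γ)) * ∑ s, dVisit M π s * gfun M πT π s := by
  have hne : (1:ℝ) - M.γ ≠ 0 := by
    have := M.γ_lt_one; intro hc; linarith [sub_eq_zero.mp hc]
  rw [dVisit_dot hπ, tsum_gfun_eq hπ hπT]
  field_simp

/-- Stationarity equation for the discounted visitation distribution. -/
lemma dVisit_stationary {π : S → A → ℝ} (hπ : IsPolicy π) (s' : S) :
    dVisit M π s' = (1 - M.γ) * M.μ s' + M.γ * ∑ s, dVisit M π s * Ppol M π s s' := by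
  have hs : Summable (fun t => M.γ ^ t * stateDist M π t s') := summable_dVisit_aux hπ s'
  have expand : dVisit M π s'
      = (1 - M.γ) * (M.μ s' + ∑' t : ℕ, M.γ ^ (t+1) * stateDist M π (t+1) s') := by
    rw [dVisit, Summable.tsum_eq_zero_add hs, pow_zero, one_mul]
    rfl
  rw [expand, mul_add]
  congr 1
  have e1 : ∀ t : ℕ, M.γ ^ (t+1) * stateDist M π (t+1) s'
      = ∑ s, M.γ * (M.γ ^ t * stateDist M π t s * Ppol M π s s') := by
    intro t
    rw [stateDist_succ_kernel t s', pow_succ, Finset.mul_sum]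
    exact Finset.sum_congr rfl fun s _ => by ring
  rw [tsum_congr e1,
    Summable.tsum_finsetSum (fun s (_ : s ∈ Finset.univ) =>
      (((summable_dVisit_aux hπ s).mul_right (Ppol M π s s')).mul_left M.γ)),
    Finset.mul_sum, Finset.mul_sum]
  refine Finset.sum_congr rfl fun s _ => ?_
  rw [tsum_mul_left, tsum_mul_right, dVisit]
  ring

/-- ℓ¹ bound on the shift of visitation distributions. -/
lemma visit_shift {π β : S → A → ℝ} (hπ : IsPolicy π) (hβ : IsPolicy β) :
    (1 - M.γ) * ∑ s', |dVisit M π s' - dVisit M β s'|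
      ≤ M.γ * ∑ s, dVisit M β s * ∑ a, |π s a - β s a| := by
  set Δ : S → ℝ := fun s => dVisit M π s - dVisit M β s with hΔ
  have hPd : ∀ s s', Ppol M π s s' - Ppol M β s s' = ∑ a, (π s a - β s a) * M.P s a s' := by
    intro s s'
    rw [Ppol, Ppol, ← Finset.sum_sub_distrib]
    exact Finset.sum_congr rfl fun a _ => by ring
  have hdel : ∀ s', Δ s' = M.γ * ∑ s, (Δ s * Ppol M π s s'
      + dVisit M β s * ∑ a, (π s a - β s a) * M.P s a s') := by
    intro s'
    have e : ∀ s, Δ s * Ppol M π s s' + dVisit M β s * ∑ a, (π s a - β s a) * M.P s a s'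
        = dVisit M π s * Ppol M π s s' - dVisit M β s * Ppol M β s s' := by
      intro s
      rw [← hPd s s']
      simp only [hΔ]
      ring
    rw [Finset.sum_congr rfl fun s (_ : s ∈ Finset.univ) => e s, Finset.sum_sub_distrib]
    simp only [hΔ]
    rw [dVisit_stationary hπ s', dVisit_stationary hβ s']
    ring
  have habs : ∀ s', |Δ s'| ≤ M.γ * ∑ s, (|Δ s| * Ppol M π s s'
      + dVisit M β s * ∑ a, |π s a - β s a| * M.P s a s') := by
    intro s'
    rw [hdel s', abs_mul, abs_of_nonneg M.γ_nonneg]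
    apply mul_le_mul_of_nonneg_left _ M.γ_nonneg
    calc |∑ s, (Δ s * Ppol M π s s' + dVisit M β s * ∑ a, (π s a - β s a) * M.P s a s')|
        ≤ ∑ s, |Δ s * Ppol M π s s' + dVisit M β s * ∑ a, (π s a - β s a) * M.P s a s'| :=
          Finset.abs_sum_le_sum_abs _ _
      _ ≤ _ := by
          refine Finset.sum_le_sum fun s _ => ?_
          calc |Δ s * Ppol M π s s' + dVisit M β s * ∑ a, (π s a - β s a) * M.P s a s'|
              ≤ |Δ s * Ppol M π s s'| + |dVisit M β s * ∑ a, (π s a - β s a) * M.P s a s'| :=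
                abs_add_le _ _
            _ ≤ _ := by
                apply add_le_add
                · rw [abs_mul, abs_of_nonneg (Ppol_nonneg hπ s s')]
                · rw [abs_mul, abs_of_nonneg (dVisit_nonneg hβ s)]
                  apply mul_le_mul_of_nonneg_left _ (dVisit_nonneg hβ s)
                  calc |∑ a, (π s a - β s a) * M.P s a s'|
                      ≤ ∑ a, |(π s a - β s a) * M.P s a s'| := Finset.abs_sum_le_sum_abs _ _
                    _ = ∑ a, |π s a - β s a| * M.P s a s' := by
                        refine Finset.sum_congr rfl fun a _ => ?_
                        rw [abs_mul, abs_of_nonneg (M.P_nonneg s a s')]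
  have main : ∑ s', |Δ s'| ≤ M.γ * (∑ s, |Δ s|
      + ∑ s, dVisit M β s * ∑ a, |π s a - β s a|) := by
    calc ∑ s', |Δ s'| ≤ ∑ s', M.γ * ∑ s, (|Δ s| * Ppol M π s s'
          + dVisit M β s * ∑ a, |π s a - β s a| * M.P s a s') :=
          Finset.sum_le_sum fun s' _ => habs s'
      _ = M.γ * ∑ s, ∑ s', (|Δ s| * Ppol M π s s'
          + dVisit M β s * ∑ a, |π s a - β s a| * M.P s a s') := by
          rw [← Finset.mul_sum, Finset.sum_comm]
      _ = M.γ * (∑ s, |Δ s| + ∑ s, dVisit M β s * ∑ a, |π s a - β s a|) := by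
          congr 1
          rw [← Finset.sum_add_distrib]
          refine Finset.sum_congr rfl fun s _ => ?_
          rw [Finset.sum_add_distrib, ← Finset.mul_sum, Ppol_sum hπ s, mul_one, ← Finset.mul_sum]
          congr 2
          have e2 : ∀ a, ∑ s', |π s a - β s a| * M.P s a s' = |π s a - β s a| := by
            intro a
            rw [← Finset.mul_sum, M.P_sum, mul_one]
          rw [Finset.sum_comm]
          exact Finset.sum_congr rfl fun a _ => e2 a
  linarith [main]

end OffPolicy




/-- KL-regularized off-policy lower bound (advantage realignment + Pinsker–Jensen). -/
theorem kl_regularized_offpolicy_lower_bound [Nonempty S] (M : FinMDP S A)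
    (πT βT π : S → A → ℝ)
    (hπT : IsPolicy πT) (hβT : IsPolicy βT) (hπ : IsPolicy π)
    (hβpos : ∀ s a, 0 < βT s a) (hπpos : ∀ s a, 0 < βT s a → 0 < π s a) :
    Jret M π - Jret M πT ≥
      (1 / (1 - M.γ)) * (∑ s, dVisit M βT s * ∑ a, βT s a *
          (π s a / βT s a * Adv M πT s a))
        - 2 * M.γ * (univ.sup' univ_nonempty fun s' => |∑ b, π s' b * Adv M πT s' b|)
            / (1 - M.γ) ^ 2 *
          Real.sqrt ((1 / 2) * ∑ s, dVisit M βT s * DKL (βT s) (π s)) := by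
  have hγ0 := M.γ_nonneg
  have hγ1 := M.γ_lt_one
  have h1γ : (0:ℝ) < 1 - M.γ := by linarith
  set g : S → ℝ := OffPolicy.gfun M πT π with hg
  set ε : ℝ := univ.sup' univ_nonempty fun s' => |∑ b, π s' b * Adv M πT s' b| with hε
  set dβ : S → ℝ := dVisit M βT with hdβ
  set dπ : S → ℝ := dVisit M π with hdπ
  set K : ℝ := ∑ s, dβ s * DKL (βT s) (π s) with hK
  have hterm : ∀ s, (∑ a, βT s a * (π s a / βT s a * Adv M πT s a)) = g s := by
    intro s
    rw [hg]
    show _ = ∑ a, π s a * Adv M πT s a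
    refine Finset.sum_congr rfl fun a _ => ?_
    have hne := (hβpos s a).ne'
    field_simp
  have hεb : ∀ s, |g s| ≤ ε := by
    intro s
    have := Finset.le_sup' (f := fun s' => |∑ b, π s' b * Adv M πT s' b|) (Finset.mem_univ s)
    exact this
  have hε0 : 0 ≤ ε := le_trans (abs_nonneg _) (hεb (Classical.arbitrary S))
  have hdβ0 : ∀ s, 0 ≤ dβ s := OffPolicy.dVisit_nonneg hβT
  have hdβ1 : ∑ s, dβ s = 1 := OffPolicy.dVisit_sum hβT
  set ℓ : S → ℝ := fun s => ∑ a, |π s a - βT s a| with hℓ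
  have hℓ0 : ∀ s, 0 ≤ ℓ s := fun s => Finset.sum_nonneg fun a _ => abs_nonneg _
  have hKL : ∀ s, (ℓ s)^2 ≤ 2 * DKL (βT s) (π s) := by
    intro s
    have hp := finite_pinsker (p := βT s) (q := π s) (fun a => hβpos s a)
      (fun a => hπpos s a (hβpos s a)) (hβT.2 s) (hπ.2 s)
    have hcomm : ℓ s = ∑ a, |βT s a - π s a| := by
      rw [hℓ]
      exact Finset.sum_congr rfl fun a _ => abs_sub_comm _ _
    rw [hcomm]
    exact hp
  have hCS : (∑ s, dβ s * ℓ s)^2 ≤ 2 * K := by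
    have h1 : (∑ s, dβ s * ℓ s)^2 ≤ (∑ s, dβ s) * ∑ s, dβ s * (ℓ s)^2 := by
      have hcs := Finset.sum_mul_sq_le_sq_mul_sq Finset.univ (fun s => Real.sqrt (dβ s))
        (fun s => Real.sqrt (dβ s) * ℓ s)
      calc (∑ s, dβ s * ℓ s)^2
          = (∑ s, Real.sqrt (dβ s) * (Real.sqrt (dβ s) * ℓ s))^2 := by
            congr 1
            refine Finset.sum_congr rfl fun s _ => ?_
            rw [← mul_assoc, Real.mul_self_sqrt (hdβ0 s)]
        _ ≤ (∑ s, Real.sqrt (dβ s)^2) * ∑ s, (Real.sqrt (dβ s) * ℓ s)^2 := hcs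
        _ = (∑ s, dβ s) * ∑ s, dβ s * (ℓ s)^2 := by
            congr 1
            · exact Finset.sum_congr rfl fun s _ => Real.sq_sqrt (hdβ0 s)
            · refine Finset.sum_congr rfl fun s _ => ?_
              rw [mul_pow, Real.sq_sqrt (hdβ0 s)]
    calc (∑ s, dβ s * ℓ s)^2 ≤ (∑ s, dβ s) * ∑ s, dβ s * (ℓ s)^2 := h1
      _ = ∑ s, dβ s * (ℓ s)^2 := by rw [hdβ1, one_mul]
      _ ≤ ∑ s, dβ s * (2 * DKL (βT s) (π s)) := Finset.sum_le_sum fun s _ =>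
            mul_le_mul_of_nonneg_left (hKL s) (hdβ0 s)
      _ = 2 * K := by
            rw [hK, Finset.mul_sum]
            exact Finset.sum_congr rfl fun s _ => by ring
  have hl1_nonneg : 0 ≤ ∑ s, dβ s * ℓ s :=
    Finset.sum_nonneg fun s _ => mul_nonneg (hdβ0 s) (hℓ0 s)
  have hBsqrt : ∑ s, dβ s * ℓ s ≤ Real.sqrt (2 * K) :=
    Real.le_sqrt_of_sq_le hCS
  have hsq : Real.sqrt (2*K) = 2 * Real.sqrt ((1/2)*K) := by
    rw [show (2:ℝ)*K = 2^2 * ((1/2)*K) by ring, Real.sqrt_mul (by positivity) _,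
      Real.sqrt_sq (by norm_num : (0:ℝ) ≤ 2)]
  have hshift := OffPolicy.visit_shift (M := M) (π := π) (β := βT) hπ hβT
  have hSD : ∑ s, |dπ s - dβ s| ≤ (M.γ / (1-M.γ)) * Real.sqrt (2*K) := by
    rw [div_mul_eq_mul_div, le_div_iff₀ h1γ]
    have h2 : M.γ * ∑ s, dβ s * ℓ s ≤ M.γ * Real.sqrt (2*K) :=
      mul_le_mul_of_nonneg_left hBsqrt hγ0
    nlinarith [hshift, h2]
  set D : ℝ := ∑ s, (dπ s - dβ s) * g s with hD
  have hDexp : ∑ s, dπ s * g s = (∑ s, dβ s * g s) + D := by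
    rw [hD, Finset.sum_congr rfl fun s (_ : s ∈ Finset.univ) => sub_mul (dπ s) (dβ s) (g s),
      Finset.sum_sub_distrib]
    ring
  have hDabs : |D| ≤ ε * ∑ s, |dπ s - dβ s| := by
    rw [hD]
    calc |∑ s, (dπ s - dβ s) * g s| ≤ ∑ s, |(dπ s - dβ s) * g s| :=
          Finset.abs_sum_le_sum_abs _ _
      _ = ∑ s, |dπ s - dβ s| * |g s| := Finset.sum_congr rfl fun s _ => abs_mul _ _
      _ ≤ ∑ s, |dπ s - dβ s| * ε := Finset.sum_le_sum fun s _ =>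
            mul_le_mul_of_nonneg_left (hεb s) (abs_nonneg _)
      _ = ε * ∑ s, |dπ s - dβ s| := by rw [← Finset.sum_mul, mul_comm]
  have hPD : Jret M π - Jret M πT = (1/(1-M.γ)) * ∑ s, dπ s * g s :=
    OffPolicy.perf_diff hπ hπT
  rw [ge_iff_le,
    Finset.sum_congr rfl fun s (_ : s ∈ Finset.univ) =>
      (by rw [hterm s] : dβ s * ∑ a, βT s a * (π s a / βT s a * Adv M πT s a) = dβ s * g s)]
  rw [hPD, hDexp]
  have hc : (0:ℝ) < 1/(1-M.γ) := by positivity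
  have hx : (1/(1-M.γ)) * (-(ε * ∑ s, |dπ s - dβ s|)) ≤ (1/(1-M.γ)) * D :=
    mul_le_mul_of_nonneg_left (by linarith [neg_abs_le D, hDabs]) hc.le
  have hy : ε * ∑ s, |dπ s - dβ s| ≤ ε * ((M.γ / (1-M.γ)) * Real.sqrt (2*K)) :=
    mul_le_mul_of_nonneg_left hSD hε0
  have hz : (1/(1-M.γ)) * (ε * ((M.γ / (1-M.γ)) * Real.sqrt (2*K)))
      = 2 * M.γ * ε / (1 - M.γ)^2 * Real.sqrt ((1/2)*K) := by
    rw [hsq]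
    field_simp
  have hy' : (1/(1-M.γ)) * (ε * ∑ s, |dπ s - dβ s|)
      ≤ (1/(1-M.γ)) * (ε * ((M.γ / (1-M.γ)) * Real.sqrt (2*K))) :=
    mul_le_mul_of_nonneg_left hy hc.le
  linarith [hx, hy', hz.le, hz.ge]
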